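/- Let d ≥ 3 be an integer and let A = { x ∈ [0,1/2]^d : ‖x‖₂ ≤ 1/π }. Then 2^d · ∫_A 1/(2d − 2·Σ_{i=1}^d cos(2π x_i)) dx ≤ 3 / (4·π^{d/2}·Γ(d/2)), where Γ is the Gamma function. -/

import Mathlib

open Real MeasureTheory Set Metric
open scoped ENNReal NNReal


lemma sin_ge_sub_cube' (t : ℝ) (ht : 0 ≤ t) : t - t^3/6 ≤ Real.sin t := by
  have hmono : Monotone (fun t : ℝ => Real.sin t - t + t^3/6) := by
    have hderiv : ∀ x : ℝ, HasDerivAt (fun t : ℝ => Real.sin t - t + t^3/6)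
        (Real.cos x - 1 + x^2/2) x := by
      intro x
      have h1 := (Real.hasDerivAt_sin x).sub (hasDerivAt_id x)
      have h2 := (hasDerivAt_pow 3 x).div_const 6
      have h := h1.add h2
      exact h.congr_deriv (by norm_num; ring)
    have : ∀ x : ℝ, 0 ≤ Real.cos x - 1 + x^2/2 := by
      intro x
      have := Real.one_sub_sq_div_two_le_cos (x := x)
      linarith
    exact monotone_of_deriv_nonneg (fun x => (hderiv x).differentiableAt)
      (fun x => by rw [(hderiv x).deriv]; exact this x)
  have := hmono ht
  simp at this
  linarith

lemma cos_le_quartic (t : ℝ) : Real.cos t ≤ 1 - t^2/2 + t^4/24 := by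
  wlog ht : 0 ≤ t with H
  · have := H (-t) (by linarith [le_of_not_ge ht])
    rw [Real.cos_neg, neg_pow, neg_pow] at this; norm_num at this; linarith
  have hmono : MonotoneOn (fun t : ℝ => 1 - t^2/2 + t^4/24 - Real.cos t) (Set.Ici 0) := by
    have hderiv : ∀ x : ℝ, HasDerivAt (fun t : ℝ => 1 - t^2/2 + t^4/24 - Real.cos t)
        (-x + x^3/6 - (-Real.sin x)) x := by
      intro x
      have h0 := ((hasDerivAt_pow 2 x).div_const 2)
      have h1 := ((hasDerivAt_const x (1:ℝ)).sub h0).add ((hasDerivAt_pow 4 x).div_const 24)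
      have h := h1.sub (Real.hasDerivAt_cos x)
      exact h.congr_deriv (by norm_num; ring)
    apply monotoneOn_of_deriv_nonneg (convex_Ici 0)
    · exact (Continuous.continuousOn (by continuity))
    · intro x hx
      exact ((hderiv x).differentiableAt).differentiableWithinAt
    · intro x hx
      rw [(hderiv x).deriv]
      simp only [interior_Ici, Set.mem_Ioi] at hx
      have := sin_ge_sub_cube' x hx.le
      linarith
  have h0 : (fun t : ℝ => 1 - t^2/2 + t^4/24 - Real.cos t) 0 = 0 := by simp
  have := hmono (Set.mem_Ici.2 le_rfl) (Set.mem_Ici.2 ht) ht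
  simp only [h0] at this
  linarith

variable {d : ℕ}

noncomputable def negk (k : Fin d) : EuclideanSpace ℝ (Fin d) ≃ₗᵢ[ℝ] EuclideanSpace ℝ (Fin d) where
  toLinearEquiv :=
  { toFun := fun x => WithLp.toLp 2 (fun i => if i = k then -(x i) else x i)
    invFun := fun x => WithLp.toLp 2 (fun i => if i = k then -(x i) else x i)
    map_add' := by
      intro x y; ext i
      by_cases h : i = k <;> simp [h, PiLp.add_apply] <;> ring
    map_smul' := by
      intro c x; ext i
      by_cases h : i = k <;> simp [h, PiLp.smul_apply, smul_eq_mul]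
    left_inv := by intro x; ext i; by_cases h : i = k <;> simp [h]
    right_inv := by intro x; ext i; by_cases h : i = k <;> simp [h] }
  norm_map' := by
    intro x
    rw [EuclideanSpace.norm_eq, EuclideanSpace.norm_eq]
    congr 1
    refine Finset.sum_congr rfl fun i _ => ?_
    by_cases h : i = k <;> simp [h]

lemma negk_apply (k : Fin d) (x : EuclideanSpace ℝ (Fin d)) (i : Fin d) :
    negk k x i = if i = k then -(x i) else x i := rfl

lemma hyperplane_null (k : Fin d) : volume {x : EuclideanSpace ℝ (Fin d) | x k = 0} = 0 := by
  have h : {x : EuclideanSpace ℝ (Fin d) | x k = 0} =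
      ((LinearMap.ker (EuclideanSpace.projₗ (𝕜 := ℝ) (ι := Fin d) k)) : Set _) := by
    ext x; simp [LinearMap.mem_ker]
  rw [h]
  apply Measure.addHaar_submodule
  intro htop
  have h1 : (EuclideanSpace.single k (1:ℝ) : EuclideanSpace ℝ (Fin d)) ∈
      LinearMap.ker (EuclideanSpace.projₗ (𝕜 := ℝ) (ι := Fin d) k) := htop ▸ trivial
  simp [LinearMap.mem_ker] at h1

/-- the sets in the symmetry induction -/
def SS (d : ℕ) (r : ℝ) (k : ℕ) : Set (EuclideanSpace ℝ (Fin d)) :=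
  {x | ∀ i : Fin d, (i : ℕ) < k → 0 ≤ x i} ∩ closedBall 0 r

lemma measurable_eval (i : Fin d) : Measurable fun x : EuclideanSpace ℝ (Fin d) => x i :=
  by fun_prop

lemma SS_measurable (r : ℝ) (k : ℕ) : MeasurableSet (SS d r k) := by
  apply MeasurableSet.inter
  · have : {x : EuclideanSpace ℝ (Fin d) | ∀ i : Fin d, (i : ℕ) < k → 0 ≤ x i} =
        ⋂ i : Fin d, {x | (i : ℕ) < k → 0 ≤ x i} := by ext x; simp
    rw [this]
    refine MeasurableSet.iInter fun i => ?_
    by_cases hik : (i : ℕ) < k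
    · simp only [hik, forall_true_left]
      exact measurableSet_le measurable_const (measurable_eval i)
    · simp [hik]
  · exact measurableSet_closedBall

lemma symm_step (r : ℝ) (G : EuclideanSpace ℝ (Fin d) → ℝ≥0∞)
    (hGrad : ∀ (k : Fin d) x, G (negk k x) = G x) (k : ℕ) (hk : k < d) :
    ∫⁻ x in SS d r k, G x = 2 * ∫⁻ x in SS d r (k + 1), G x := by
  set κ : Fin d := ⟨k, hk⟩ with hκdef
  have hκ : (κ : ℕ) = k := rfl
  have hTmeas : MeasurableSet {x : EuclideanSpace ℝ (Fin d) | 0 ≤ x κ} :=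
    measurableSet_le measurable_const (measurable_eval κ)
  have hsplit : ∫⁻ x in SS d r k, G x =
      (∫⁻ x in {x | 0 ≤ x κ} ∩ SS d r k, G x) + ∫⁻ x in {x | 0 ≤ x κ}ᶜ ∩ SS d r k, G x := by
    rw [← lintegral_add_compl (fun x => G x) hTmeas (μ := volume.restrict (SS d r k)),
      Measure.restrict_restrict hTmeas, Measure.restrict_restrict hTmeas.compl]
  have hSk1 : {x : EuclideanSpace ℝ (Fin d) | 0 ≤ x κ} ∩ SS d r k = SS d r (k+1) := by
    ext x
    simp only [SS, mem_inter_iff, mem_setOf_eq, mem_closedBall]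
    constructor
    · rintro ⟨h0, h1, h2⟩
      refine ⟨fun i hi => ?_, h2⟩
      rcases Nat.lt_or_ge (i : ℕ) k with h | h
      · exact h1 i h
      · have : i = κ := Fin.ext (by omega)
        rw [this]; exact h0
    · rintro ⟨h1, h2⟩
      exact ⟨h1 κ (by omega), fun i hi => h1 i (by omega), h2⟩
  -- second piece equals first piece via reflection
  have hneg : ∫⁻ x in {x : EuclideanSpace ℝ (Fin d) | 0 ≤ x κ}ᶜ ∩ SS d r k, G x
      = ∫⁻ x in {x : EuclideanSpace ℝ (Fin d) | 0 < x κ} ∩ SS d r k, G x := by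
    have hinv : Function.LeftInverse (negk κ) (negk κ) := by
      intro x; ext i; by_cases h : i = κ <;> simp [negk_apply, h]
    have himg : ∀ s : Set (EuclideanSpace ℝ (Fin d)), (negk κ) '' s = (negk κ) ⁻¹' s :=
      fun s => Set.image_eq_preimage_of_inverse hinv hinv ▸ rfl
    have hSSpre : ∀ x : EuclideanSpace ℝ (Fin d), negk κ x ∈ SS d r k ↔ x ∈ SS d r k := by
      intro x
      simp only [SS, mem_inter_iff, mem_setOf_eq, mem_closedBall, dist_zero_right,
        (negk κ).norm_map]
      constructor
      · rintro ⟨h1, h2⟩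
        refine ⟨fun i hi => ?_, h2⟩
        have hiκ : i ≠ κ := by intro he; rw [he] at hi; omega
        have := h1 i hi
        rwa [negk_apply, if_neg hiκ] at this
      · rintro ⟨h1, h2⟩
        refine ⟨fun i hi => ?_, h2⟩
        have hiκ : i ≠ κ := by intro he; rw [he] at hi; omega
        rw [negk_apply, if_neg hiκ]
        exact h1 i hi
    have hmp := ((negk κ).measurePreserving).setLIntegral_comp_emb
      ((negk κ).toHomeomorph.measurableEmbedding) G
      ({x : EuclideanSpace ℝ (Fin d) | 0 < x κ} ∩ SS d r k)
    have himgset : (negk κ) '' ({x : EuclideanSpace ℝ (Fin d) | 0 < x κ} ∩ SS d r k)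
        = {x : EuclideanSpace ℝ (Fin d) | 0 ≤ x κ}ᶜ ∩ SS d r k := by
      rw [himg]
      ext x
      have hxκ : (negk κ x) κ = -(x κ) := by simp [negk_apply]
      simp only [mem_preimage, mem_inter_iff, mem_compl_iff, mem_setOf_eq, hxκ, hSSpre x, not_le]
      constructor
      · rintro ⟨h1, h2⟩; exact ⟨by linarith, h2⟩
      · rintro ⟨h1, h2⟩; exact ⟨by linarith, h2⟩
    rw [himgset] at hmp
    rw [← hmp]
    exact lintegral_congr fun x => (hGrad κ x)
  have hae : ({x : EuclideanSpace ℝ (Fin d) | 0 < x κ} ∩ SS d r k : Set _)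
      =ᵐ[volume] ({x : EuclideanSpace ℝ (Fin d) | 0 ≤ x κ} ∩ SS d r k : Set _) := by
    rw [MeasureTheory.ae_eq_set]
    constructor
    · have : ({x : EuclideanSpace ℝ (Fin d) | 0 < x κ} ∩ SS d r k) \
          ({x : EuclideanSpace ℝ (Fin d) | 0 ≤ x κ} ∩ SS d r k) = ∅ := by
        ext x; simp only [mem_diff, mem_inter_iff, mem_setOf_eq, mem_empty_iff_false, iff_false]
        rintro ⟨⟨h1, h2⟩, h3⟩
        exact h3 ⟨h1.le, h2⟩
      rw [this]; simp
    · apply measure_mono_null (t := {x : EuclideanSpace ℝ (Fin d) | x κ = 0})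
      · rintro x ⟨⟨h1, h2⟩, h3⟩
        simp only [mem_setOf_eq]
        by_contra hne
        exact h3 ⟨lt_of_le_of_ne h1 (Ne.symm hne), h2⟩
      · exact hyperplane_null κ
  rw [hsplit, hSk1, hneg, setLIntegral_congr hae, hSk1, two_mul]

lemma lintegral_polar (d : ℕ) (hd : 1 ≤ d) (H : ℝ → ℝ≥0∞) (hH : Measurable H) :
    ∫⁻ x : EuclideanSpace ℝ (Fin d), H ‖x‖ =
      (volume : Measure (EuclideanSpace ℝ (Fin d))).toSphere univ *
        ∫⁻ y in Ioi (0:ℝ), ENNReal.ofReal (y ^ (d - 1)) * H y := by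
  haveI : Nontrivial (EuclideanSpace ℝ (Fin d)) := by
    apply Module.nontrivial_of_finrank_pos (R := ℝ)
    simp only [finrank_euclideanSpace, Fintype.card_fin]
    omega
  have hdim : Module.finrank ℝ (EuclideanSpace ℝ (Fin d)) = d := by
    simp [finrank_euclideanSpace]
  have hmeas : Measurable fun z : sphere (0:EuclideanSpace ℝ (Fin d)) 1 × Ioi (0:ℝ) => H z.2 :=
    hH.comp (measurable_subtype_coe.comp measurable_snd)
  calc ∫⁻ x : EuclideanSpace ℝ (Fin d), H ‖x‖ ∂volume
      = ∫⁻ x : ({(0:EuclideanSpace ℝ (Fin d))}ᶜ : Set (EuclideanSpace ℝ (Fin d))), H ‖x.1‖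
          ∂(volume.comap Subtype.val) := by
        rw [lintegral_subtype_comap (measurableSet_singleton (0:EuclideanSpace ℝ (Fin d))).compl
          (fun x : EuclideanSpace ℝ (Fin d) => H ‖x‖), restrict_compl_singleton]
    _ = ∫⁻ p : sphere (0:EuclideanSpace ℝ (Fin d)) 1 × Ioi (0:ℝ), H p.2
          ∂((volume : Measure (EuclideanSpace ℝ (Fin d))).toSphere.prod
            (.volumeIoiPow (Module.finrank ℝ (EuclideanSpace ℝ (Fin d)) - 1))) :=
        by simpa only [homeomorphUnitSphereProd_apply_snd_coe] using
          (Measure.measurePreserving_homeomorphUnitSphereProd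
          (volume : Measure (EuclideanSpace ℝ (Fin d)))).lintegral_comp hmeas
    _ = (volume : Measure (EuclideanSpace ℝ (Fin d))).toSphere univ *
          ∫⁻ y : Ioi (0:ℝ), H y
            ∂(Measure.volumeIoiPow (Module.finrank ℝ (EuclideanSpace ℝ (Fin d)) - 1)) := by
        rw [MeasureTheory.lintegral_prod _ hmeas.aemeasurable]
        simp [lintegral_const, mul_comm]
    _ = (volume : Measure (EuclideanSpace ℝ (Fin d))).toSphere univ *
        ∫⁻ y in Ioi (0:ℝ), ENNReal.ofReal (y ^ (d - 1)) * H y := by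
        congr 1
        rw [Measure.volumeIoiPow,
          lintegral_withDensity_eq_lintegral_mul _ (by fun_prop)
            (show Measurable fun y : Ioi (0:ℝ) => H ↑y from hH.comp measurable_subtype_coe)]
        simp only [Pi.mul_apply, hdim]
        rw [lintegral_subtype_comap measurableSet_Ioi
          (fun a : ℝ => ENNReal.ofReal (a ^ (d - 1)) * H a)]

lemma symm_total {d : ℕ} (r : ℝ) (G : EuclideanSpace ℝ (Fin d) → ℝ≥0∞)
    (hGrad : ∀ (k : Fin d) x, G (negk k x) = G x) :
    ∫⁻ x in closedBall (0 : EuclideanSpace ℝ (Fin d)) r, G x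
      = 2 ^ d * ∫⁻ x in SS d r d, G x := by
  have key : ∀ k : ℕ, k ≤ d → ∫⁻ x in SS d r 0, G x = 2 ^ k * ∫⁻ x in SS d r k, G x := by
    intro k
    induction k with
    | zero => intro _; simp
    | succ n ih =>
      intro h
      rw [ih (Nat.le_of_succ_le h), symm_step r G hGrad n (by omega), pow_succ, mul_assoc]
  have h0 : SS d r 0 = closedBall (0 : EuclideanSpace ℝ (Fin d)) r := by
    ext x; simp [SS]
  rw [← h0, key d le_rfl]

-- pointwise bound
lemma pointwise_bound {d : ℕ} (x : EuclideanSpace ℝ (Fin d)) (hx : ‖x‖ ≤ 1 / π) :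
    1 / (2 * d - 2 * ∑ i, Real.cos (2 * π * x i)) ≤ 3 / (8 * π ^ 2 * ‖x‖ ^ 2) := by
  have hπ : (0:ℝ) < π := pi_pos
  set N : ℝ := ∑ i, (x i) ^ 2 with hN
  have hNnn : 0 ≤ N := Finset.sum_nonneg fun i _ => sq_nonneg _
  have hnorm : ‖x‖ ^ 2 = N := by
    rw [EuclideanSpace.norm_eq, Real.sq_sqrt (Finset.sum_nonneg fun i _ => sq_nonneg _)]
    simp [hN, sq_abs]
  have hD : (8 * π ^ 2 / 3) * N ≤ 2 * d - 2 * ∑ i, Real.cos (2 * π * x i) := by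
    have h1 : ∀ i : Fin d, 2 - 2 * Real.cos (2 * π * x i)
        ≥ (2*π*x i)^2 - (2*π*x i)^4 / 12 := by
      intro i
      have := cos_le_quartic (2 * π * x i)
      nlinarith [this]
    have h2 : (2:ℝ) * d - 2 * ∑ i, Real.cos (2 * π * x i)
        = ∑ i, (2 - 2 * Real.cos (2 * π * x i)) := by
      rw [Finset.sum_sub_distrib, Finset.sum_const, Finset.card_univ, Fintype.card_fin,
        ← Finset.mul_sum]
      push_cast; ring
    have h3 : ∑ i, ((2*π*x i)^2 - (2*π*x i)^4 / 12)
        = 4 * π^2 * N - (4 * π^4 / 3) * ∑ i, (x i)^4 := by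
      rw [Finset.sum_sub_distrib, hN, Finset.mul_sum, Finset.mul_sum]
      congr 1
      · exact Finset.sum_congr rfl fun i _ => by ring
      · exact Finset.sum_congr rfl fun i _ => by ring
    have h4 : ∑ i, (x i)^4 ≤ N^2 := by
      have heq : ∀ i : Fin d, (x i)^4 = ((x i)^2)^2 := fun i => by ring
      simp_rw [heq, hN]
      exact Finset.sum_sq_le_sq_sum_of_nonneg fun i _ => sq_nonneg _
    have h5 : N ≤ 1 / π^2 := by
      have h := mul_self_le_mul_self (norm_nonneg x) hx
      rw [← sq, ← sq, hnorm] at h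
      calc N ≤ (1/π)^2 := h
        _ = 1 / π^2 := by rw [div_pow, one_pow]
    calc (8 * π ^ 2 / 3) * N = 4 * π^2 * N - (4 * π^4/3) * ((1/π^2) * N) := by
          field_simp; ring
      _ ≤ 4 * π^2 * N - (4 * π^4/3) * N^2 := by
          have hNN : N^2 ≤ (1/π^2) * N := by nlinarith
          have := mul_le_mul_of_nonneg_left hNN (show (0:ℝ) ≤ 4*π^4/3 by positivity)
          linarith
      _ ≤ 4 * π^2 * N - (4 * π^4/3) * ∑ i, (x i)^4 := by
          have := mul_le_mul_of_nonneg_left h4 (show (0:ℝ) ≤ 4*π^4/3 by positivity)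
          linarith
      _ = ∑ i, ((2*π*x i)^2 - (2*π*x i)^4 / 12) := h3.symm
      _ ≤ ∑ i, (2 - 2 * Real.cos (2 * π * x i)) := Finset.sum_le_sum fun i _ => h1 i
      _ = 2 * d - 2 * ∑ i, Real.cos (2 * π * x i) := h2.symm
  rcases eq_or_lt_of_le hNnn with h0 | h0
  · -- N = 0 : x = 0, both sides are 0
    have hxz : ∀ i : Fin d, x i = 0 := by
      intro i
      have hz : ∑ i : Fin d, (x i)^2 = 0 := by rw [← hN, ← h0]
      have := (Finset.sum_eq_zero_iff_of_nonneg
        (fun i (_ : i ∈ Finset.univ) => sq_nonneg (x i))).1 hz i (Finset.mem_univ i)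
      exact pow_eq_zero_iff (n := 2) (by norm_num) |>.1 this
    have hx0 : ‖x‖ ^ 2 = 0 := by rw [hnorm, ← h0]
    rw [hx0]
    have hcos : ∀ i : Fin d, Real.cos (2 * π * x i) = 1 := by
      intro i; rw [hxz i, mul_zero, Real.cos_zero]
    have hDz : 2 * (d:ℝ) - 2 * ∑ i, Real.cos (2 * π * x i) = 0 := by
      simp [hcos]
    rw [hDz]
    simp
  · have hpos : 0 < (8 * π ^ 2 / 3) * N := by positivity
    have hDpos : 0 < 2 * d - 2 * ∑ i, Real.cos (2 * π * x i) := lt_of_lt_of_le hpos hD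
    rw [div_le_div_iff₀ hDpos (by rw [hnorm]; exact mul_pos (by positivity) h0)]
    rw [hnorm]
    nlinarith [hD]


lemma one_dim_eval (d : ℕ) (hd : 3 ≤ d) :
    ∫⁻ y in Ioi (0:ℝ), ENNReal.ofReal (y ^ (d - 1)) *
      (if y ≤ 1/π then ENNReal.ofReal (3 / (8 * π ^ 2 * y ^ 2)) else 0)
    = ENNReal.ofReal ((3 / (8 * π^2)) * ((1/π) ^ (d-2) / ((d:ℝ) - 2))) := by
  have hπ : (0:ℝ) < π := pi_pos
  set c : ℝ := 3 / (8 * π^2) with hc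
  set r : ℝ := 1/π with hr
  have hr0 : 0 < r := by positivity
  set φ : ℝ → ℝ := (Ioc (0:ℝ) r).indicator (fun y => c * y^(d-3)) with hφ
  have step1 : ∫⁻ y in Ioi (0:ℝ), ENNReal.ofReal (y ^ (d - 1)) *
      (if y ≤ r then ENNReal.ofReal (3 / (8 * π ^ 2 * y ^ 2)) else 0)
      = ∫⁻ y in Ioi (0:ℝ), ENNReal.ofReal (φ y) := by
    apply setLIntegral_congr_fun measurableSet_Ioi
    intro y hy
    dsimp only
    have hy0 : 0 < y := hy
    by_cases hyr : y ≤ r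
    · rw [if_pos hyr, ← ENNReal.ofReal_mul (by positivity)]
      congr 1
      rw [hφ, Set.indicator_of_mem (Set.mem_Ioc.mpr ⟨hy0, hyr⟩)]
      have hsplit : y^(d-1) = y^(d-3) * y^2 := by rw [← pow_add]; congr 1; omega
      rw [hsplit, hc]
      field_simp
    · rw [if_neg hyr, mul_zero, hφ, indicator_of_notMem (fun h => hyr h.2), ENNReal.ofReal_zero]
  rw [step1]
  have hint : IntegrableOn φ (Ioi (0:ℝ)) := by
    apply Integrable.integrableOn
    rw [hφ, integrable_indicator_iff measurableSet_Ioc]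
    exact (continuous_const.mul (continuous_pow (d-3))).integrableOn_Ioc
  rw [← ofReal_integral_eq_lintegral_ofReal hint
    (ae_of_all _ (indicator_nonneg (fun y hy => mul_nonneg (by positivity) (pow_nonneg hy.1.le _))))]
  congr 1
  rw [hφ, MeasureTheory.setIntegral_indicator measurableSet_Ioc,
    inter_eq_right.2 Ioc_subset_Ioi_self, ← intervalIntegral.integral_of_le hr0.le,
    intervalIntegral.integral_const_mul, integral_pow]
  have h1 : d - 3 + 1 = d - 2 := by omega
  rw [h1]
  rw [zero_pow (by omega : d - 2 ≠ 0)]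
  have h2 : ((d:ℝ) - 2) = ((d - 2 : ℕ) : ℝ) := by
    push_cast [Nat.cast_sub (by omega : 2 ≤ d)]; ring
  rw [h2]
  have h3 : ((d - 3 : ℕ) : ℝ) + 1 = ((d - 2 : ℕ) : ℝ) := by
    have : d - 3 + 1 = d - 2 := by omega
    exact_mod_cast congrArg (Nat.cast : ℕ → ℝ) this
  rw [h3]
  ring


lemma arith_final (d : ℕ) (hd : 3 ≤ d) :
    (d:ℝ) * (Real.sqrt π ^ d / Real.Gamma ((d:ℝ)/2 + 1)) *
      ((3/(8*π^2)) * ((1/π)^(d-2) / ((d:ℝ)-2)))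
    ≤ 3 / (4 * π ^ ((d:ℝ)/2) * Real.Gamma ((d:ℝ)/2)) := by
  have hπ : (0:ℝ) < π := pi_pos
  have hd0 : (0:ℝ) < d := by exact_mod_cast Nat.lt_of_lt_of_le (by norm_num) hd
  have hd3 : (3:ℝ) ≤ (d:ℝ) := by exact_mod_cast hd
  have hd2 : (0:ℝ) < (d:ℝ) - 2 := by linarith
  have hΓpos : 0 < Real.Gamma ((d:ℝ)/2) := Real.Gamma_pos_of_pos (by positivity)
  have hΓ1 : Real.Gamma ((d:ℝ)/2 + 1) = ((d:ℝ)/2) * Real.Gamma ((d:ℝ)/2) :=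
    Real.Gamma_add_one (by positivity)
  set P : ℝ := π ^ ((d:ℝ)/2) with hP
  have hPpos : 0 < P := Real.rpow_pos_of_pos hπ _
  have hsqrt : Real.sqrt π ^ d = P := by
    rw [hP, show (d:ℝ)/2 = (1/2) * (d:ℝ) by ring, Real.rpow_mul hπ.le,
      ← Real.sqrt_eq_rpow, Real.rpow_natCast]
  set w : ℝ := π ^ (d - 2 : ℕ) with hw
  have hwpos : 0 < w := by positivity
  have hP2 : P * P = w * π ^ 2 := by
    rw [hP, hw, ← Real.rpow_add hπ, show (d:ℝ)/2 + (d:ℝ)/2 = ((d:ℕ):ℝ) by push_cast; ring,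
      Real.rpow_natCast, ← pow_add]
    congr 1
    omega
  have hqw : (1/π : ℝ)^(d-2) = w⁻¹ := by rw [one_div, inv_pow, hw]
  rw [hsqrt, hΓ1, hqw, le_div_iff₀ (by positivity)]
  have key : (d:ℝ) * (P / ((d:ℝ)/2 * Real.Gamma ((d:ℝ)/2))) *
      ((3/(8*π^2)) * (w⁻¹ / ((d:ℝ)-2))) * (4 * P * Real.Gamma ((d:ℝ)/2))
      = 3 / ((d:ℝ) - 2) := by
    have e2 : (d:ℝ) * (P / ((d:ℝ)/2 * Real.Gamma ((d:ℝ)/2))) *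
        ((3/(8*π^2)) * (w⁻¹ / ((d:ℝ)-2))) * (4 * P * Real.Gamma ((d:ℝ)/2))
        = 3 * (P*P) * w⁻¹ / (π^2 * ((d:ℝ)-2)) := by
      field_simp
      ring
    rw [e2, hP2]
    field_simp
  rw [key]
  exact div_le_self (by norm_num) (by linarith)

theorem integral_regionA_upper (d : ℕ) (hd : 3 ≤ d) :
    (2 : ℝ) ^ d * ∫ x in {x : EuclideanSpace ℝ (Fin d) |
        (∀ i, x i ∈ Set.Icc (0 : ℝ) (1/2)) ∧ ‖x‖ ≤ 1 / Real.pi},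
        1 / (2 * d - 2 * ∑ i, Real.cos (2 * Real.pi * x i))
      ≤ 3 / (4 * Real.pi ^ ((d : ℝ) / 2) * Real.Gamma ((d : ℝ) / 2)) := by
  have hπ : (0:ℝ) < π := pi_pos
  set r : ℝ := 1 / π with hr
  set A : Set (EuclideanSpace ℝ (Fin d)) :=
    {x | (∀ i, x i ∈ Set.Icc (0 : ℝ) (1/2)) ∧ ‖x‖ ≤ 1 / π} with hA
  set f : EuclideanSpace ℝ (Fin d) → ℝ :=
    fun x => 1 / (2 * d - 2 * ∑ i, Real.cos (2 * π * x i)) with hf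
  set G : EuclideanSpace ℝ (Fin d) → ℝ≥0∞ :=
    fun x => ENNReal.ofReal (3 / (8 * π^2 * ‖x‖^2)) with hG
  -- measurability of f
  have hf_meas : Measurable f := by
    apply Measurable.div measurable_const
    apply Measurable.sub measurable_const
    apply Measurable.const_mul
    exact Finset.measurable_sum _ fun i _ =>
      Real.measurable_cos.comp ((measurable_eval i).const_mul (2 * π))
  -- nonnegativity of f
  have hf_nn : ∀ x, 0 ≤ f x := by
    intro x
    apply one_div_nonneg.mpr
    have hsum : ∑ i, Real.cos (2 * π * x i) ≤ (d : ℝ) := by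
      calc ∑ i, Real.cos (2 * π * x i) ≤ ∑ _i : Fin d, (1:ℝ) :=
            Finset.sum_le_sum fun i _ => Real.cos_le_one _
        _ = d := by simp
    linarith
  -- G measurable and reflection-invariant
  have hG_meas : Measurable G := by
    apply Measurable.ennreal_ofReal
    exact Measurable.div measurable_const
      (measurable_const.mul ((measurable_norm).pow_const 2))
  have hGrad : ∀ (k : Fin d) x, G (negk k x) = G x := fun k x => by
    rw [hG]; simp only [(negk k).norm_map]
  -- the real integral as a lintegral
  rw [MeasureTheory.integral_eq_lintegral_of_nonneg_ae
    (ae_of_all _ fun x => hf_nn x) (hf_meas.aestronglyMeasurable)]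
  set L : ℝ≥0∞ := ∫⁻ x in A, ENNReal.ofReal (f x) with hL
  -- bound chain on lintegrals
  have hchain : (2:ℝ≥0∞) ^ d * L ≤
      ENNReal.ofReal ((d:ℝ) * (Real.sqrt π ^ d / Real.Gamma ((d:ℝ)/2 + 1)) *
        ((3/(8*π^2)) * ((1/π)^(d-2) / ((d:ℝ)-2)))) := by
    have h1 : L ≤ ∫⁻ x in A, G x := by
      apply setLIntegral_mono hG_meas
      intro x hx
      exact ENNReal.ofReal_le_ofReal (pointwise_bound x hx.2)
    have h2 : (∫⁻ x in A, G x) ≤ ∫⁻ x in SS d r d, G x := by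
      apply lintegral_mono_set
      rintro x ⟨hx1, hx2⟩
      exact ⟨fun i _ => (hx1 i).1, by rwa [mem_closedBall, dist_zero_right]⟩
    have h3 : (2:ℝ≥0∞) ^ d * ∫⁻ x in SS d r d, G x
        = ∫⁻ x in closedBall (0 : EuclideanSpace ℝ (Fin d)) r, G x :=
      (symm_total r G hGrad).symm
    -- polar evaluation over the ball
    have h4 : (∫⁻ x in closedBall (0 : EuclideanSpace ℝ (Fin d)) r, G x)
        = ∫⁻ x : EuclideanSpace ℝ (Fin d),
            (fun y : ℝ => if y ≤ r then ENNReal.ofReal (3 / (8 * π ^ 2 * y ^ 2)) else 0) ‖x‖ := by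
      rw [← lintegral_indicator measurableSet_closedBall]
      apply lintegral_congr
      intro x
      by_cases hx : ‖x‖ ≤ r
      · rw [Set.indicator_of_mem (by rwa [mem_closedBall, dist_zero_right])]
        dsimp only
        rw [if_pos hx]
      · rw [Set.indicator_of_notMem (by rwa [mem_closedBall, dist_zero_right])]
        dsimp only
        rw [if_neg hx]
    have hHmeas : Measurable
        (fun y : ℝ => if y ≤ r then ENNReal.ofReal (3 / (8 * π ^ 2 * y ^ 2)) else 0) := by
      apply Measurable.ite (measurableSet_Iic (a := r))
      · exact Measurable.ennreal_ofReal
          (measurable_const.div (measurable_const.mul ((measurable_id).pow_const 2)))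
      · exact measurable_const
    have h5 := lintegral_polar d (by omega)
      (fun y : ℝ => if y ≤ r then ENNReal.ofReal (3 / (8 * π ^ 2 * y ^ 2)) else 0) hHmeas
    have h6 := one_dim_eval d hd
    -- toSphere univ
    haveI : Nonempty (Fin d) := ⟨⟨0, by omega⟩⟩
    haveI : Nontrivial (EuclideanSpace ℝ (Fin d)) := by
      apply Module.nontrivial_of_finrank_pos (R := ℝ)
      simp only [finrank_euclideanSpace, Fintype.card_fin]
      omega
    have h7 : (volume : Measure (EuclideanSpace ℝ (Fin d))).toSphere univ
        = (d : ℝ≥0∞) * ENNReal.ofReal (Real.sqrt π ^ d / Real.Gamma ((d:ℝ)/2 + 1)) := by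
      rw [Measure.toSphere_apply_univ, EuclideanSpace.volume_ball]
      simp [finrank_euclideanSpace, Fintype.card_fin]
    calc (2:ℝ≥0∞) ^ d * L ≤ (2:ℝ≥0∞) ^ d * ∫⁻ x in SS d r d, G x := by
          exact mul_le_mul_right (h1.trans h2) _
      _ = ∫⁻ x in closedBall (0 : EuclideanSpace ℝ (Fin d)) r, G x := h3
      _ = (d : ℝ≥0∞) * ENNReal.ofReal (Real.sqrt π ^ d / Real.Gamma ((d:ℝ)/2 + 1)) *
            ENNReal.ofReal ((3 / (8 * π^2)) * ((1/π) ^ (d-2) / ((d:ℝ) - 2))) := by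
          rw [h4, h5, h7, h6]
      _ = ENNReal.ofReal ((d:ℝ) * (Real.sqrt π ^ d / Real.Gamma ((d:ℝ)/2 + 1)) *
            ((3/(8*π^2)) * ((1/π)^(d-2) / ((d:ℝ)-2)))) := by
          rw [← ENNReal.ofReal_natCast d, ← ENNReal.ofReal_mul (by positivity),
            ← ENNReal.ofReal_mul]
          apply mul_nonneg (Nat.cast_nonneg d)
          have : 0 < Real.Gamma ((d:ℝ)/2 + 1) :=
            Real.Gamma_pos_of_pos (by positivity)
          positivity
  -- pass to real numbers
  have hV_nn : 0 ≤ (d:ℝ) * (Real.sqrt π ^ d / Real.Gamma ((d:ℝ)/2 + 1)) *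
      ((3/(8*π^2)) * ((1/π)^(d-2) / ((d:ℝ)-2))) := by
    have hΓ : 0 < Real.Gamma ((d:ℝ)/2 + 1) := Real.Gamma_pos_of_pos (by positivity)
    have hd2 : (0:ℝ) < (d:ℝ) - 2 := by
      have : (3:ℝ) ≤ (d:ℝ) := by exact_mod_cast hd
      linarith
    positivity
  have hfinal : (2:ℝ) ^ d * L.toReal ≤ (d:ℝ) * (Real.sqrt π ^ d / Real.Gamma ((d:ℝ)/2 + 1)) *
      ((3/(8*π^2)) * ((1/π)^(d-2) / ((d:ℝ)-2))) := by
    have := ENNReal.toReal_mono (by exact ENNReal.ofReal_ne_top) hchain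
    rw [ENNReal.toReal_mul, ENNReal.toReal_ofReal hV_nn] at this
    have h2d : ((2:ℝ≥0∞) ^ d).toReal = (2:ℝ)^d := by
      rw [ENNReal.toReal_pow]
      norm_num
    rwa [h2d] at this
  exact hfinal.trans (arith_final d hd)
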